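/- For each fixed λ ≥ 0, the function t ↦ f(λ,t)/t is nonincreasing on (0,∞), where f(λ,t) = log((1/(1+t))e^{−λt} + (t/(1+t))e^{λ}). -/

import Mathlib

open Real

lemma key1 (x : ℝ) (hx : 0 ≤ x) : 0 ≤ 1 - Real.exp (-x)^2 - 2*x*Real.exp (-x) := by
  have hq := Real.quadratic_le_exp_of_nonneg hx
  have h1 : Real.exp (-x) * Real.exp x = 1 := by rw [← Real.exp_add]; simp
  have h2 : Real.exp (-x) > 0 := Real.exp_pos _
  have h3 : Real.exp x^2 - 1 - 2*x*Real.exp x ≥ 0 := by nlinarith [sq_nonneg x]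
  nlinarith [mul_nonneg (mul_nonneg h2.le h2.le) h3]

lemma key2 (x : ℝ) (hx : 0 ≤ x) : 0 ≤ 2 - (x^2+2*x+2)*Real.exp (-x) := by
  have hq := Real.quadratic_le_exp_of_nonneg hx
  have h1 : Real.exp (-x) * Real.exp x = 1 := by rw [← Real.exp_add]; simp
  have h2 : Real.exp (-x) > 0 := Real.exp_pos _
  nlinarith

lemma concave_g (lam : ℝ) (hlam : 0 ≤ lam) :
    ConcaveOn ℝ (Set.Ici (0:ℝ)) (fun t : ℝ =>
      Real.log (Real.exp (-(lam*t)) + t * Real.exp lam) - Real.log (1+t)) := by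
  set u : ℝ → ℝ := fun t => Real.exp (-(lam*t)) + t * Real.exp lam with hu
  have hupos : ∀ t : ℝ, 0 ≤ t → 0 < u t := fun t ht => by
    have := Real.exp_pos (-(lam*t))
    have := Real.exp_pos lam
    simp only [hu]
    nlinarith
  have hucont : Continuous u := by fun_prop
  have hderiv_u : ∀ t : ℝ, HasDerivAt u (Real.exp lam - lam * Real.exp (-(lam*t))) t := by
    intro t
    have h1 : HasDerivAt (fun t : ℝ => -(lam*t)) (-lam) t := by
      simpa using ((hasDerivAt_id t).const_mul lam).fun_neg
    have h2 := h1.exp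
    have h3 : HasDerivAt (fun t : ℝ => t * Real.exp lam) (Real.exp lam) t := by
      simpa using (hasDerivAt_id t).mul_const (Real.exp lam)
    have := h2.fun_add h3
    exact this.congr_deriv (by ring)
  refine concaveOn_of_hasDerivWithinAt2_nonpos (convex_Ici 0) ?_
      (f' := fun t => (Real.exp lam - lam * Real.exp (-(lam*t))) / u t - 1/(1+t))
      (f'' := fun t => (lam^2 * Real.exp (-(lam*t)) * u t
          - (Real.exp lam - lam * Real.exp (-(lam*t)))^2) / (u t)^2 + 1/(1+t)^2)
      ?_ ?_ ?_
  · -- continuity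
    apply ContinuousOn.sub
    · exact (hucont.continuousOn).log (fun t ht => (hupos t ht).ne')
    · apply ContinuousOn.log
      · fun_prop
      · intro t ht
        have : (0:ℝ) ≤ t := ht
        positivity
  · -- first derivative
    rw [interior_Ici]
    intro t ht
    have ht0 : (0:ℝ) < t := ht
    have h1t : (0:ℝ) < 1 + t := by linarith
    have hlog := ((hderiv_u t).log (hupos t ht0.le).ne')
    have h1 : HasDerivAt (fun t : ℝ => Real.log (1+t)) (1/(1+t)) t := by
      have := ((hasDerivAt_id t).const_add 1).log h1t.ne'
      simpa using this
    have := hlog.sub h1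
    exact this.hasDerivWithinAt
  · -- second derivative
    rw [interior_Ici]
    intro t ht
    have ht0 : (0:ℝ) < t := ht
    have h1t : (0:ℝ) < 1 + t := by linarith
    have hN : HasDerivAt (fun t : ℝ => Real.exp lam - lam * Real.exp (-(lam*t)))
        (lam^2 * Real.exp (-(lam*t))) t := by
      have h1 : HasDerivAt (fun t : ℝ => -(lam*t)) (-lam) t := by
        simpa using ((hasDerivAt_id t).const_mul lam).fun_neg
      have h2 := (h1.exp.const_mul lam).const_sub (Real.exp lam)
      exact h2.congr_deriv (by ring)
    have hdiv := hN.div (hderiv_u t) (hupos t ht0.le).ne'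
    have h1 : HasDerivAt (fun t : ℝ => 1/(1+t)) (-(1/(1+t)^2)) t := by
      have h2 : HasDerivAt (fun t : ℝ => 1 + t) 1 t := (hasDerivAt_id t).const_add 1
      exact ((hasDerivAt_const t (1:ℝ)).fun_div h2 h1t.ne').congr_deriv (by ring)
    have := hdiv.sub h1
    refine HasDerivAt.hasDerivWithinAt ?_
    refine this.congr_deriv ?_
    have hu2 : (u t) ≠ 0 := (hupos t ht0.le).ne'
    field_simp
    ring
  · -- nonpositivity of second derivative
    rw [interior_Ici]
    intro t ht
    have ht0 : (0:ℝ) < t := ht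
    have h1t : (0:ℝ) < 1 + t := by linarith
    have hut : 0 < u t := hupos t ht0.le
    rw [div_add' _ _ _ (by positivity), div_nonpos_iff]
    right
    constructor
    · -- numerator ≤ 0
      set x := lam * (1+t) with hx
      have hx0 : 0 ≤ x := by positivity
      have e1 : Real.exp (-(lam*t)) = Real.exp lam * Real.exp (-x) := by
        rw [← Real.exp_add, hx]; ring_nf
      have hk1 := key1 x hx0
      have hk2 := key2 x hx0
      have hs : 0 < Real.exp (-x) := Real.exp_pos _
      have hE : 0 < Real.exp lam := Real.exp_pos _
      have key : (1+t)^2 * (Real.exp lam^2 - (lam^2*t + 2*lam) * (Real.exp lam^2 * Real.exp (-x)))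
          ≥ (Real.exp lam * Real.exp (-x) + t * Real.exp lam)^2 := by
        have expand : (1+t)^2 * (Real.exp lam^2 - (lam^2*t + 2*lam) * (Real.exp lam^2 * Real.exp (-x)))
            - (Real.exp lam * Real.exp (-x) + t * Real.exp lam)^2
            = Real.exp lam^2 * ((1 - Real.exp (-x)^2 - 2*x*Real.exp (-x))
              + t * (2 - (x^2+2*x+2)*Real.exp (-x))) := by
          rw [hx]; ring
        nlinarith [mul_nonneg (sq_nonneg (Real.exp lam)) (add_nonneg hk1
          (mul_nonneg ht0.le hk2))]
      have huval : u t = Real.exp lam * Real.exp (-x) + t * Real.exp lam := by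
        rw [hu]; simp only [e1]
      have e2 : Real.exp lam - lam * Real.exp (-(lam*t))
          = Real.exp lam - lam * (Real.exp lam * Real.exp (-x)) := by rw [e1]
      have e3 : lam^2 * Real.exp (-(lam*t)) = lam^2 * (Real.exp lam * Real.exp (-x)) := by
        rw [e1]
      rw [huval, e2, e3]
      have h5 : 1/(1+t)^2 * (Real.exp lam * Real.exp (-x) + t * Real.exp lam)^2
          ≤ Real.exp lam^2 - (lam^2*t + 2*lam) * (Real.exp lam^2 * Real.exp (-x)) := by
        rw [div_mul_eq_mul_div, div_le_iff₀ (by positivity : (0:ℝ) < (1+t)^2)]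
        nlinarith [key]
      nlinarith [h5]
    · positivity

theorem f_div_t_antitone (lam : ℝ) (hlam : 0 ≤ lam) :
    AntitoneOn (fun t : ℝ =>
        Real.log ((1/(1+t)) * Real.exp (-(lam * t)) + (t/(1+t)) * Real.exp lam) / t)
      (Set.Ioi (0:ℝ)) := by
  have hconc := concave_g lam hlam
  have hanti := hconc.slope_anti (Set.self_mem_Ici)
  have heq : ∀ t : ℝ, 0 < t →
      Real.log ((1/(1+t)) * Real.exp (-(lam * t)) + (t/(1+t)) * Real.exp lam) / t
      = slope (fun t : ℝ =>
          Real.log (Real.exp (-(lam*t)) + t * Real.exp lam) - Real.log (1+t)) 0 t := by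
    intro t ht
    have h1t : (0:ℝ) < 1 + t := by linarith
    have hut : (0:ℝ) < Real.exp (-(lam*t)) + t * Real.exp lam := by positivity
    have e1 : (1/(1+t)) * Real.exp (-(lam * t)) + (t/(1+t)) * Real.exp lam
        = (Real.exp (-(lam*t)) + t * Real.exp lam) / (1+t) := by
      field_simp
    rw [slope_def_field]
    simp only [e1]
    rw [Real.log_div hut.ne' h1t.ne']
    simp [div_eq_div_iff ht.ne' ht.ne']
  intro a ha b hb hab
  have ha' : (0:ℝ) < a := ha
  have hb' : (0:ℝ) < b := hb
  simp only []
  rw [heq a ha', heq b hb']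
  exact hanti ⟨le_of_lt ha', by simp [ha'.ne']⟩ ⟨le_of_lt hb', by simp [hb'.ne']⟩ hab
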